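/- arXiv:1003.1273 — 12 statements merged into one kernel-verified Lean document; each statement's English description precedes it below -/
import Mathlib

section
/- For every natural number n ≥ 1, the product of all primes p with n < p ≤ 2n is at most 4^n. -/
theorem primorial_segment_le_four_pow (n : ℕ) (hn : 1 ≤ n) :
    (∏ p ∈ (Finset.Ioc n (2 * n)).filter Nat.Prime, p) ≤ 4 ^ n := by
  have hdvd : (∏ p ∈ (Finset.Ioc n (2 * n)).filter Nat.Prime, p) ∣ Nat.centralBinom n := by
    refine Finset.prod_primes_dvd _ ?_ ?_
    · intro p hp
      simp only [Finset.mem_filter] at hp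
      exact hp.2.prime
    · intro p hp
      simp only [Finset.mem_filter, Finset.mem_Ioc] at hp
      have : 2 * n - n < p := by omega
      exact Nat.Prime.dvd_choose hp.2 hp.1.1 this hp.1.2
  have h1 : (∏ p ∈ (Finset.Ioc n (2 * n)).filter Nat.Prime, p) ≤ Nat.centralBinom n :=
    Nat.le_of_dvd n.centralBinom_pos hdvd
  have h2 : Nat.centralBinom n ≤ 4 ^ n := by
    have hmem : n ∈ Finset.range (2 * n + 1) := by
      simp; omega
    calc Nat.centralBinom n = (2 * n).choose n := rfl
      _ ≤ ∑ m ∈ Finset.range (2 * n + 1), (2 * n).choose m :=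
        Finset.single_le_sum (fun i _ => Nat.zero_le _) hmem
      _ = 2 ^ (2 * n) := Nat.sum_range_choose (2 * n)
      _ = 4 ^ n := by rw [pow_mul]; norm_num
  exact h1.trans h2
end

section
/- For every natural number n ≥ 1, θ(2n) − θ(n) ≤ 2n·log 2, where θ is the Chebyshev theta function. -/
/-- The Chebyshev theta function: the sum of the natural logarithms of all primes `p ≤ x`. -/
noncomputable def chebyshevTheta (x : ℕ) : ℝ :=
    ∑ p ∈ (Finset.range (x + 1)).filter Nat.Prime, Real.log p

lemma chebyshevTheta_eq_log_primorial (x : ℕ) :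
    chebyshevTheta x = Real.log (primorial x) := by
  rw [primorial, Nat.cast_prod, Real.log_prod]
  · rfl
  · intro p hp
    exact_mod_cast (Finset.mem_filter.1 hp).2.pos.ne'

theorem chebyshevTheta_two_mul_sub (n : ℕ) (hn : 1 ≤ n) :
    chebyshevTheta (2 * n) - chebyshevTheta n ≤ (2 * n) * Real.log 2 := by
  rw [chebyshevTheta_eq_log_primorial, chebyshevTheta_eq_log_primorial]
  have h1 : primorial (2 * n) ≤ primorial n * Nat.choose (2 * n) n := by
    have := primorial_add_le (le_refl n)
    rwa [← two_mul] at this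
  have h2 : Nat.choose (2 * n) n ≤ 4 ^ n :=
    (Nat.choose_le_choose n (Nat.le_succ (2 * n))).trans (Nat.choose_middle_le_pow n)
  have h3 : primorial (2 * n) ≤ primorial n * 4 ^ n :=
    h1.trans (Nat.mul_le_mul_left _ h2)
  have h4 : Real.log (primorial (2 * n)) ≤ Real.log (primorial n) + n * Real.log 4 := by
    calc Real.log (primorial (2 * n)) ≤ Real.log ((primorial n : ℝ) * 4 ^ n) := by
          apply Real.log_le_log (by exact_mod_cast primorial_pos (2 * n))
          exact_mod_cast h3
      _ = Real.log (primorial n) + n * Real.log 4 := by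
          rw [Real.log_mul (by exact_mod_cast (primorial_pos n).ne') (by positivity),
            Real.log_pow]
  have h5 : (4 : ℝ) = 2 ^ 2 := by norm_num
  rw [h5, Real.log_pow] at h4
  push_cast at h4 ⊢
  linarith
end

section
/- For every natural number n, θ(n) ≤ (2·log 2)·n, where θ is the Chebyshev theta function (Chebyshev's upper bound). -/
theorem chebyshev_upper_bound (n : ℕ) :
    chebyshevTheta n ≤ (2 * Real.log 2) * n := by
  have h1 : chebyshevTheta n = Real.log (primorial n) := by
    rw [chebyshevTheta, primorial, Nat.cast_prod, Real.log_prod]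
    intro p hp
    simp only [Finset.mem_filter] at hp
    exact_mod_cast hp.2.pos.ne'
  have h2 : Real.log (primorial n) ≤ Real.log ((4 : ℕ) ^ n) := by
    apply Real.log_le_log (by exact_mod_cast primorial_pos n)
    exact_mod_cast primorial_le_4_pow n
  rw [h1]
  refine h2.trans_eq ?_
  push_cast
  rw [Real.log_pow, show (4:ℝ) = 2^2 by norm_num, Real.log_pow]
  push_cast
  ring
end

section
/- Fact 2: If P is a Z-polynomial of darga d1 and Q is a Z-polynomial of darga d2, then the product P·Q is a Z-polynomial of darga d1 + d2. -/
/-- A `Z`-polynomial of darga `d`: a nonzero polynomial with natural-number coefficients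
whose coefficient sequence is symmetric about `d/2` (so its trailing degree plus its degree
equals `d`), vanishes above `d`, and weakly increases up to the middle (hence is unimodal). -/
def IsZPoly (P : Polynomial ℕ) (d : ℕ) : Prop :=
  P ≠ 0 ∧ (∀ i ≤ d, P.coeff i = P.coeff (d - i)) ∧ (∀ i, d < i → P.coeff i = 0) ∧
    (∀ i, 2 * (i + 1) ≤ d → P.coeff i ≤ P.coeff (i + 1))

open Polynomial Finset in
private def zstep (P : Polynomial ℕ) (a : ℕ) : ℕ :=
  P.coeff a - (if a = 0 then 0 else P.coeff (a - 1))

private lemma zstep_sum (P : Polynomial ℕ) (m : ℕ)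
    (h : ∀ a < m, P.coeff a ≤ P.coeff (a + 1)) :
    ∑ a ∈ Finset.range (m + 1), zstep P a = P.coeff m := by
  induction m with
  | zero => simp [zstep]
  | succ n ih =>
    rw [Finset.sum_range_succ, ih (fun a ha => h a (by omega))]
    have := h n (by omega)
    show P.coeff n + (P.coeff (n + 1) - if n + 1 = 0 then 0 else P.coeff (n + 1 - 1)) = _
    rw [if_neg (Nat.succ_ne_zero n)]
    simp only [Nat.add_sub_cancel]
    omega

private lemma coeff_decomp {P : Polynomial ℕ} {d : ℕ} (hP : IsZPoly P d) (i : ℕ) :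
    P.coeff i = ∑ a ∈ Finset.range (d / 2 + 1),
      zstep P a * (if a ≤ i ∧ i ≤ d - a then 1 else 0) := by
  obtain ⟨-, hsym, hvan, hmono⟩ := hP
  by_cases hi : i ≤ d
  · have key : ∀ a ∈ Finset.range (d / 2 + 1),
        zstep P a * (if a ≤ i ∧ i ≤ d - a then 1 else 0)
          = if a ≤ min i (d - i) then zstep P a else 0 := by
      intro a _
      have hiff : (a ≤ i ∧ i ≤ d - a) ↔ a ≤ min i (d - i) := by omega
      by_cases h : a ≤ min i (d - i)
      · rw [if_pos (hiff.mpr h), if_pos h, mul_one]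
      · rw [if_neg (fun hc => h (hiff.mp hc)), if_neg h, mul_zero]
    rw [Finset.sum_congr rfl key]
    have hsub : ∑ a ∈ Finset.range (min i (d - i) + 1),
          (if a ≤ min i (d - i) then zstep P a else 0)
        = ∑ a ∈ Finset.range (d / 2 + 1), (if a ≤ min i (d - i) then zstep P a else 0) :=
      Finset.sum_subset (Finset.range_subset_range.2 (by omega))
        (by intro x _ hx; rw [Finset.mem_range] at hx; rw [if_neg (by omega)])
    rw [← hsub]
    rw [Finset.sum_congr rfl
      (fun a ha => if_pos (by rw [Finset.mem_range] at ha; omega))]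
    rw [zstep_sum P (min i (d - i)) (fun a ha => hmono a (by omega))]
    rcases le_or_gt i (d - i) with h | h
    · rw [min_eq_left h]
    · rw [min_eq_right h.le, ← hsym i hi]
  · rw [hvan i (by omega)]
    refine (Finset.sum_eq_zero ?_).symm
    intro a _
    rw [if_neg (by omega), mul_zero]

private lemma Tcard_eq (d1 d2 a b k : ℕ) (hbk : b ≤ k) :
    ((Finset.HasAntidiagonal.antidiagonal k).filter
        (fun ij => (a ≤ ij.1 ∧ ij.1 ≤ d1 - a) ∧ (b ≤ ij.2 ∧ ij.2 ≤ d2 - b))).card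
      = (min (d1 - a) (k - b) + 1) - max a (k - (d2 - b)) := by
  have himg : ((Finset.HasAntidiagonal.antidiagonal k).filter
        (fun ij => (a ≤ ij.1 ∧ ij.1 ≤ d1 - a) ∧ (b ≤ ij.2 ∧ ij.2 ≤ d2 - b)))
      = (Finset.Icc (max a (k - (d2 - b))) (min (d1 - a) (k - b))).image
          (fun x => (x, k - x)) := by
    ext ⟨i, j⟩
    simp only [Finset.mem_filter, Finset.mem_image, Finset.mem_Icc, Finset.HasAntidiagonal.mem_antidiagonal,
      max_le_iff, le_min_iff, Prod.mk.injEq]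
    constructor
    · rintro ⟨hij, ⟨h1, h2⟩, h3, h4⟩
      exact ⟨i, ⟨⟨h1, by omega⟩, h2, by omega⟩, rfl, by omega⟩
    · rintro ⟨x, ⟨⟨hx1, hx2⟩, hx3, hx4⟩, rfl, rfl⟩
      exact ⟨by omega, ⟨hx1, hx3⟩, by omega, by omega⟩
  rw [himg, Finset.card_image_of_injective _
      (fun x y h => by simpa using congrArg Prod.fst h), Nat.card_Icc]

private lemma Tcard_mono (d1 d2 a b k : ℕ) (ha : 2 * a ≤ d1) (hb : 2 * b ≤ d2)
    (hk : 2 * (k + 1) ≤ d1 + d2) :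
    ((Finset.HasAntidiagonal.antidiagonal k).filter
        (fun ij => (a ≤ ij.1 ∧ ij.1 ≤ d1 - a) ∧ (b ≤ ij.2 ∧ ij.2 ≤ d2 - b))).card
      ≤ ((Finset.HasAntidiagonal.antidiagonal (k + 1)).filter
        (fun ij => (a ≤ ij.1 ∧ ij.1 ≤ d1 - a) ∧ (b ≤ ij.2 ∧ ij.2 ≤ d2 - b))).card := by
  rcases Nat.lt_or_ge k b with h | h
  · have : ((Finset.HasAntidiagonal.antidiagonal k).filter
        (fun ij => (a ≤ ij.1 ∧ ij.1 ≤ d1 - a) ∧ (b ≤ ij.2 ∧ ij.2 ≤ d2 - b))) = ∅ := by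
      rw [Finset.filter_eq_empty_iff]
      rintro ⟨i, j⟩ hij
      rw [Finset.HasAntidiagonal.mem_antidiagonal] at hij
      rintro ⟨⟨-, -⟩, hbj, -⟩
      omega
    rw [this]
    exact Nat.zero_le _
  · rw [Tcard_eq d1 d2 a b k h, Tcard_eq d1 d2 a b (k + 1) (by omega)]
    omega

private lemma coeff_mul_decomp {P Q : Polynomial ℕ} {d1 d2 : ℕ}
    (hP : IsZPoly P d1) (hQ : IsZPoly Q d2) (k : ℕ) :
    (P * Q).coeff k = ∑ a ∈ Finset.range (d1 / 2 + 1), ∑ b ∈ Finset.range (d2 / 2 + 1),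
      zstep P a * zstep Q b *
        ((Finset.HasAntidiagonal.antidiagonal k).filter
          (fun ij => (a ≤ ij.1 ∧ ij.1 ≤ d1 - a) ∧ (b ≤ ij.2 ∧ ij.2 ≤ d2 - b))).card := by
  rw [Polynomial.coeff_mul]
  have step : ∀ ij ∈ Finset.HasAntidiagonal.antidiagonal k, P.coeff ij.1 * Q.coeff ij.2
      = ∑ a ∈ Finset.range (d1 / 2 + 1), ∑ b ∈ Finset.range (d2 / 2 + 1),
          zstep P a * zstep Q b *
            (if (a ≤ ij.1 ∧ ij.1 ≤ d1 - a) ∧ (b ≤ ij.2 ∧ ij.2 ≤ d2 - b) then 1 else 0) := by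
    rintro ⟨i, j⟩ -
    rw [coeff_decomp hP i, coeff_decomp hQ j, Finset.sum_mul_sum]
    refine Finset.sum_congr rfl fun a _ => Finset.sum_congr rfl fun b _ => ?_
    by_cases h1 : (a ≤ i ∧ i ≤ d1 - a) <;> by_cases h2 : (b ≤ j ∧ j ≤ d2 - b) <;>
      simp [h1, h2]
  rw [Finset.sum_congr rfl step, Finset.sum_comm]
  refine Finset.sum_congr rfl fun a _ => ?_
  rw [Finset.sum_comm]
  refine Finset.sum_congr rfl fun b _ => ?_
  rw [← Finset.mul_sum]
  congr 1
  rw [Finset.sum_boole]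
  simp

theorem IsZPoly.mul {P Q : Polynomial ℕ} {d1 d2 : ℕ} (hP : IsZPoly P d1) (hQ : IsZPoly Q d2) :
    IsZPoly (P * Q) (d1 + d2) := by
  have hdP : P.natDegree ≤ d1 := Polynomial.natDegree_le_iff_coeff_eq_zero.mpr hP.2.2.1
  have hdQ : Q.natDegree ≤ d2 := Polynomial.natDegree_le_iff_coeff_eq_zero.mpr hQ.2.2.1
  have hPr : Polynomial.reflect d1 P = P := by
    ext i
    rw [Polynomial.coeff_reflect]
    rcases le_or_gt i d1 with h | h
    · rw [Polynomial.revAt_le h]; exact (hP.2.1 i h).symm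
    · rw [Polynomial.revAt_eq_self_of_lt h]
  have hQr : Polynomial.reflect d2 Q = Q := by
    ext i
    rw [Polynomial.coeff_reflect]
    rcases le_or_gt i d2 with h | h
    · rw [Polynomial.revAt_le h]; exact (hQ.2.1 i h).symm
    · rw [Polynomial.revAt_eq_self_of_lt h]
  have hrefl : Polynomial.reflect (d1 + d2) (P * Q) = P * Q := by
    rw [Polynomial.reflect_mul P Q hdP hdQ, hPr, hQr]
  refine ⟨mul_ne_zero hP.1 hQ.1, ?_, ?_, ?_⟩
  · intro i hi
    conv_lhs => rw [← hrefl]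
    rw [Polynomial.coeff_reflect, Polynomial.revAt_le hi]
  · intro i hi
    rw [Polynomial.coeff_mul]
    refine Finset.sum_eq_zero ?_
    rintro ⟨x, y⟩ hxy
    rw [Finset.HasAntidiagonal.mem_antidiagonal] at hxy
    rcases Nat.lt_or_ge d1 x with h | h
    · rw [hP.2.2.1 x h, zero_mul]
    · rw [hQ.2.2.1 y (by omega), mul_zero]
  · intro k hk
    rw [coeff_mul_decomp hP hQ, coeff_mul_decomp hP hQ]
    refine Finset.sum_le_sum fun a ha => Finset.sum_le_sum fun b hb => ?_
    rw [Finset.mem_range] at ha hb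
    exact Nat.mul_le_mul_left _ (Tcard_mono d1 d2 a b k (by omega) (by omega) hk)
end

section
/- For natural numbers a ≤ b and c ≤ d, the product (x^a + x^{a+1} + ⋯ + x^b)·(x^c + x^{c+1} + ⋯ + x^d) is a Z-polynomial of darga (a+b)+(c+d). -/
open Polynomial Finset in
lemma coeff_atom_mul_atom (a b c d n : ℕ) :
    ((∑ i ∈ Icc a b, (X : ℕ[X]) ^ i) * (∑ i ∈ Icc c d, (X : ℕ[X]) ^ i)).coeff n
      = if c ≤ n then min b (n - c) + 1 - max a (n - d) else 0 := by
  have hc : ∀ (u v : ℕ) (m : ℕ), ((∑ i ∈ Icc u v, (X : ℕ[X]) ^ i).coeff m)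
      = if m ∈ Icc u v then 1 else 0 := by
    intro u v m
    rw [Polynomial.finset_sum_coeff]
    simp [Polynomial.coeff_X_pow]
  rw [Polynomial.coeff_mul, Finset.Nat.sum_antidiagonal_eq_sum_range_succ_mk]
  simp only [hc, Finset.mem_Icc, ite_mul, one_mul, zero_mul]
  have step : ∀ i : ℕ,
      (if a ≤ i ∧ i ≤ b then if c ≤ n - i ∧ n - i ≤ d then (1:ℕ) else 0 else 0)
        = if (a ≤ i ∧ i ≤ b) ∧ c ≤ n - i ∧ n - i ≤ d then 1 else 0 := by
    intro i; split_ifs <;> simp_all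
  simp only [step]
  rw [← Finset.sum_filter, ← Finset.card_eq_sum_ones]
  by_cases hn : c ≤ n
  · have : (range (n+1)).filter (fun i => (a ≤ i ∧ i ≤ b) ∧ c ≤ n - i ∧ n - i ≤ d)
        = Icc (max a (n - d)) (min b (n - c)) := by
      ext i
      simp only [mem_filter, mem_range, mem_Icc, max_le_iff, le_min_iff]
      omega
    rw [this, Nat.card_Icc, if_pos hn]
  · have : (range (n+1)).filter (fun i => (a ≤ i ∧ i ≤ b) ∧ c ≤ n - i ∧ n - i ≤ d)
        = ∅ := by
      ext i
      simp only [mem_filter, mem_range, Finset.notMem_empty, iff_false, not_and]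
      omega
    rw [this, if_neg hn, Finset.card_empty]

theorem atom_mul_atom_isZPoly (a b c d : ℕ) (hab : a ≤ b) (hcd : c ≤ d) :
    IsZPoly ((∑ i ∈ Finset.Icc a b, Polynomial.X ^ i) *
      (∑ i ∈ Finset.Icc c d, Polynomial.X ^ i)) ((a + b) + (c + d)) := by
  refine ⟨?_, ?_, ?_, ?_⟩
  · intro h0
    have h := coeff_atom_mul_atom a b c d (a + c)
    rw [h0, Polynomial.coeff_zero] at h
    rw [if_pos (by omega)] at h
    omega
  · intro i hi
    rw [coeff_atom_mul_atom, coeff_atom_mul_atom]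
    split_ifs <;> omega
  · intro i hi
    rw [coeff_atom_mul_atom]
    split_ifs <;> omega
  · intro i hi
    rw [coeff_atom_mul_atom, coeff_atom_mul_atom]
    split_ifs <;> omega
end

section
/- For every natural number n ≥ 1 and every natural number k with 2k < 7n, the coefficient of x^k in (x + x^2 + x^3 + x^4 + x^5 + x^6)^n is at most the coefficient of x^{k+1}. (Probabilistically: when a fair die is rolled n times, winning k+1 dollars is at least as likely as winning k dollars whenever k is less than the expected gain 7n/2.) -/
open Polynomial Finset

noncomputable def DieAuxQ : Polynomial ℕ := ∑ i ∈ Finset.range 6, Polynomial.X ^ i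

lemma DieAuxQ_coeff (m : ℕ) : DieAuxQ.coeff m = if m < 6 then 1 else 0 := by
  simp [DieAuxQ, Polynomial.coeff_X_pow, Finset.sum_ite_eq]

lemma DieAuxQ_natDegree : DieAuxQ.natDegree = 5 := by
  have : DieAuxQ = 1 + Polynomial.X + Polynomial.X^2 + Polynomial.X^3 + Polynomial.X^4 + Polynomial.X^5 := by
    simp [DieAuxQ, Finset.sum_range_succ]
  rw [this]; compute_degree!

lemma DieAuxQ_monic : DieAuxQ.Monic := by
  unfold Polynomial.Monic Polynomial.leadingCoeff
  rw [DieAuxQ_natDegree, DieAuxQ_coeff]; norm_num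

lemma DieAuxQ_reverse : DieAuxQ.reverse = DieAuxQ := by
  ext m
  rw [Polynomial.coeff_reverse, DieAuxQ_natDegree]
  rcases le_or_gt m 5 with h | h
  · rw [Polynomial.revAt_le h, DieAuxQ_coeff, DieAuxQ_coeff]
    split_ifs <;> omega
  · rw [← Polynomial.revAtFun_eq, Polynomial.revAtFun, if_neg (not_le_of_gt h)]

lemma DieAuxQpow_reverse (n : ℕ) : (DieAuxQ ^ n).reverse = DieAuxQ ^ n := by
  induction n with
  | zero => simp [Polynomial.reverse]
  | succ n ih =>
    rw [pow_succ, Polynomial.reverse_mul, ih, DieAuxQ_reverse]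
    simp [(DieAuxQ_monic.pow n).leadingCoeff, DieAuxQ_monic.leadingCoeff]

lemma DieAuxQpow_symm (n j : ℕ) (h : j ≤ 5 * n) : (DieAuxQ ^ n).coeff j = (DieAuxQ ^ n).coeff (5 * n - j) := by
  conv_lhs => rw [← DieAuxQpow_reverse]
  rw [Polynomial.coeff_reverse, DieAuxQ_monic.natDegree_pow, DieAuxQ_natDegree,
    Polynomial.revAt_le (by omega : j ≤ n * 5)]
  congr 1; omega

lemma DieAuxQpow_coeff_zero (n j : ℕ) (h : 5 * n < j) : (DieAuxQ ^ n).coeff j = 0 := by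
  apply Polynomial.coeff_eq_zero_of_natDegree_lt
  rw [DieAuxQ_monic.natDegree_pow, DieAuxQ_natDegree]; omega

noncomputable def DieAuxP : Polynomial ℕ := ∑ i ∈ Finset.Icc 1 6, Polynomial.X ^ i

lemma sum_Icc16 {M : Type*} [AddCommMonoid M] (f : ℕ → M) :
    ∑ i ∈ Finset.Icc 1 6, f i = f 1 + f 2 + f 3 + f 4 + f 5 + f 6 := by
  rw [show Finset.Icc 1 6 = ({1,2,3,4,5,6} : Finset ℕ) from by decide]
  simp [Finset.sum_insert, add_assoc]

lemma DieAuxP_eq : DieAuxP = Polynomial.X * DieAuxQ := by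
  rw [DieAuxQ, DieAuxP, sum_Icc16]
  simp [Finset.sum_range_succ]
  ring

noncomputable def dieAuxC (n k : ℕ) : ℕ := (DieAuxP ^ n).coeff k

lemma dieAuxC_eq (n k : ℕ) : dieAuxC n k = if n ≤ k then (DieAuxQ ^ n).coeff (k - n) else 0 := by
  rw [dieAuxC, DieAuxP_eq, mul_pow, (Commute.all _ _).eq, Polynomial.coeff_mul_X_pow']

lemma dieAuxC_symm (n k : ℕ) (h : k ≤ 7 * n) : dieAuxC n k = dieAuxC n (7 * n - k) := by
  rw [dieAuxC_eq, dieAuxC_eq]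
  rcases le_or_gt n k with h1 | h1
  · rcases le_or_gt k (6 * n) with h2 | h2
    · rw [if_pos h1, if_pos (by omega), DieAuxQpow_symm n _ (by omega)]
      congr 1; omega
    · rw [if_pos h1, if_neg (by omega), DieAuxQpow_coeff_zero n _ (by omega)]
  · rw [if_neg (by omega), if_pos (by omega), DieAuxQpow_coeff_zero n _ (by omega)]

lemma dieAuxC_rec (n k : ℕ) :
    dieAuxC (n+1) k = ∑ i ∈ Finset.Icc 1 6, (if i ≤ k then dieAuxC n (k - i) else 0) := by
  unfold dieAuxC
  rw [pow_succ', DieAuxP]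
  rw [Finset.sum_mul, Polynomial.finset_sum_coeff]
  apply Finset.sum_congr rfl
  intro i _
  rw [(Commute.all _ _).eq, Polynomial.coeff_mul_X_pow']

lemma dieAuxC_step (n : ℕ) (IH : ∀ a b, a ≤ b → a + b ≤ 7 * n → dieAuxC n a ≤ dieAuxC n b)
    (k : ℕ) (hk : 2 * k < 7 * (n + 1)) : dieAuxC (n+1) k ≤ dieAuxC (n+1) (k+1) := by
  rw [dieAuxC_rec, dieAuxC_rec, sum_Icc16, sum_Icc16]
  have e2 : (if 2 ≤ k + 1 then dieAuxC n (k + 1 - 2) else 0) = (if 1 ≤ k then dieAuxC n (k - 1) else 0) := by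
    split_ifs <;> first | rfl | (exfalso; omega) | (congr 1; omega)
  have e3 : (if 3 ≤ k + 1 then dieAuxC n (k + 1 - 3) else 0) = (if 2 ≤ k then dieAuxC n (k - 2) else 0) := by
    split_ifs <;> first | rfl | (exfalso; omega) | (congr 1; omega)
  have e4 : (if 4 ≤ k + 1 then dieAuxC n (k + 1 - 4) else 0) = (if 3 ≤ k then dieAuxC n (k - 3) else 0) := by
    split_ifs <;> first | rfl | (exfalso; omega) | (congr 1; omega)
  have e5 : (if 5 ≤ k + 1 then dieAuxC n (k + 1 - 5) else 0) = (if 4 ≤ k then dieAuxC n (k - 4) else 0) := by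
    split_ifs <;> first | rfl | (exfalso; omega) | (congr 1; omega)
  have e6 : (if 6 ≤ k + 1 then dieAuxC n (k + 1 - 6) else 0) = (if 5 ≤ k then dieAuxC n (k - 5) else 0) := by
    split_ifs <;> first | rfl | (exfalso; omega) | (congr 1; omega)
  have e1 : (if 1 ≤ k + 1 then dieAuxC n (k + 1 - 1) else 0) = dieAuxC n k := by simp
  rw [e1, e2, e3, e4, e5, e6]
  have h6 : (if 6 ≤ k then dieAuxC n (k - 6) else 0) ≤ dieAuxC n k := by
    split_ifs with h
    · exact IH (k - 6) k (by omega) (by omega)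
    · exact Nat.zero_le _
  have h1 : (if 1 ≤ k then dieAuxC n (k-1) else 0) = (if 1 ≤ k then dieAuxC n (k-1) else 0) := rfl
  generalize (if 1 ≤ k then dieAuxC n (k-1) else 0) = a1 at *
  generalize (if 2 ≤ k then dieAuxC n (k-2) else 0) = a2
  generalize (if 3 ≤ k then dieAuxC n (k-3) else 0) = a3
  generalize (if 4 ≤ k then dieAuxC n (k-4) else 0) = a4
  generalize (if 5 ≤ k then dieAuxC n (k-5) else 0) = a5
  generalize hg6 : (if 6 ≤ k then dieAuxC n (k-6) else 0) = a6 at h6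
  generalize dieAuxC n k = ck at h6 ⊢
  omega

lemma dieAuxC_mono : ∀ n a b, a ≤ b → a + b ≤ 7 * n → dieAuxC n a ≤ dieAuxC n b := by
  intro n
  induction n with
  | zero =>
    intro a b hab h
    have : a = 0 ∧ b = 0 := by omega
    rw [this.1, this.2]
  | succ n IH =>
    intro a b hab h
    have step := dieAuxC_step n IH
    -- reduce to b' = min b (7(n+1) - b)
    have chain : ∀ v u, u ≤ v → 2 * v ≤ 7 * (n+1) → dieAuxC (n+1) u ≤ dieAuxC (n+1) v := by
      intro v
      induction v with
      | zero =>
        intro u huv _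
        have : u = 0 := by omega
        rw [this]
      | succ v ihv =>
        intro u huv hv
        rcases Nat.lt_or_ge u (v+1) with h' | h'
        · exact le_trans (ihv u (by omega) (by omega)) (step v (by omega))
        · have : u = v + 1 := by omega
          rw [this]
    rcases le_or_gt (2 * b) (7 * (n+1)) with hb | hb
    · exact chain b a hab hb
    · have hsym : dieAuxC (n+1) b = dieAuxC (n+1) (7 * (n+1) - b) := dieAuxC_symm (n+1) b (by omega)
      rw [hsym]
      exact chain (7 * (n+1) - b) a (by omega) (by omega)

theorem die_rolls_coeff_increasing (n k : ℕ) (hn : 1 ≤ n) (hk : 2 * k < 7 * n) :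
    (((∑ i ∈ Finset.Icc 1 6, Polynomial.X ^ i : Polynomial ℕ)) ^ n).coeff k ≤
      (((∑ i ∈ Finset.Icc 1 6, Polynomial.X ^ i : Polynomial ℕ)) ^ n).coeff (k + 1) := by
  have := dieAuxC_mono n k (k + 1) (by omega) (by omega)
  simpa [dieAuxC, DieAuxP] using this
end

section
/- For natural numbers n and k with 2k < n, there exists an injection f from the k-element subsets of {1,…,n} to the (k+1)-element subsets of {1,…,n} such that S ⊆ f(S) for every k-element subset S. -/
theorem exists_superset_injection (n k : ℕ) (h : 2 * k < n) :
    ∃ f : {S : Finset (Fin n) // S.card = k} → {T : Finset (Fin n) // T.card = k + 1},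
      Function.Injective f ∧ ∀ S, S.1 ⊆ (f S).1 := by
  classical
  set t : {S : Finset (Fin n) // S.card = k} → Finset {T : Finset (Fin n) // T.card = k + 1} :=
    fun S => Finset.univ.filter (fun T => S.1 ⊆ T.1) with ht
  have hall : ∀ s : Finset {S : Finset (Fin n) // S.card = k}, s.card ≤ (s.biUnion t).card := by
    intro s
    set B := s.biUnion t with hB
    have key : s.card * (n - k) ≤ B.card * (k + 1) := by
      apply Finset.card_mul_le_card_mul (r := fun S T => S.1 ⊆ T.1)
      · -- lower bound: each S has at least n - k supersets in B
        intro S hS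
        have : (S.1ᶜ.attach.image (fun x => (⟨insert x.1 S.1, by
            rw [Finset.card_insert_of_notMem (Finset.mem_compl.mp x.2), S.2]⟩ :
              {T : Finset (Fin n) // T.card = k + 1}))) ⊆
            B.bipartiteAbove (fun S T => S.1 ⊆ T.1) S := by
          intro T hT
          simp only [Finset.mem_image, Finset.mem_attach, true_and] at hT
          obtain ⟨x, rfl⟩ := hT
          rw [Finset.mem_bipartiteAbove]
          constructor
          · exact Finset.mem_biUnion.mpr ⟨S, hS, by
              simp [ht, Finset.subset_insert]⟩
          · exact Finset.subset_insert _ _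
        calc n - k = S.1ᶜ.attach.card := by
              rw [Finset.card_attach, Finset.card_compl, S.2, Fintype.card_fin]
          _ = (S.1ᶜ.attach.image _).card := by
              rw [Finset.card_image_of_injOn]
              intro x _ y _ hxy
              have heq : insert x.1 S.1 = insert y.1 S.1 := congrArg Subtype.val hxy
              have hxmem : x.1 ∈ insert y.1 S.1 := heq ▸ Finset.mem_insert_self x.1 S.1
              rcases Finset.mem_insert.mp hxmem with h' | h'
              · exact Subtype.ext h'
              · exact absurd h' (Finset.mem_compl.mp x.2)
          _ ≤ _ := Finset.card_le_card this
      · -- upper bound: each T contains at most k + 1 subsets of size k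
        intro T _
        have : (s.bipartiteBelow (fun S T => S.1 ⊆ T.1) T).card
            ≤ (T.1.powersetCard k).card := by
          apply Finset.card_le_card_of_injOn (fun S => S.1)
          · intro S hS
            rw [Finset.mem_coe, Finset.mem_bipartiteBelow] at hS
            exact Finset.mem_coe.mpr <| Finset.mem_powersetCard.mpr ⟨hS.2, S.2⟩
          · intro a _ b _ hab
            exact Subtype.ext hab
        simpa [Finset.card_powersetCard, T.2, Nat.choose_succ_self_right] using this
    have hnk : k + 1 ≤ n - k := by omega
    have : s.card * (k + 1) ≤ B.card * (k + 1) :=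
      le_trans (Nat.mul_le_mul_left _ hnk) key
    exact Nat.le_of_mul_le_mul_right (by simpa [Nat.mul_comm] using this) (Nat.succ_pos k)
  obtain ⟨f, hf, hmem⟩ := (Finset.all_card_le_biUnion_card_iff_existsInjective' t).mp hall
  exact ⟨f, hf, fun S => (Finset.mem_filter.mp (hmem S)).2⟩
end

section
/- For every natural number n, the Boolean lattice of all subsets of {1,…,n} admits a symmetric chain decomposition: the collection of all subsets of {1,…,n} can be partitioned into chains, where each chain consists of sets S_r ⊂ S_{r+1} ⊂ ⋯ ⊂ S_{n−r} for some r with 2r ≤ n, with |S_i| = i for each r ≤ i ≤ n−r (so each consecutive pair differs by adding one element, and the smallest and largest cardinalities in each chain sum to n). -/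
open Finset

/- ## lifting lemmas -/
variable {n : ℕ}

def lf (S : Finset (Fin n)) : Finset (Fin (n+1)) := S.map Fin.castSuccEmb

lemma last_not_mem_lf (S : Finset (Fin n)) : Fin.last n ∉ lf S := by
  simp only [lf, mem_map]
  rintro ⟨x, _, hx⟩
  exact Fin.ne_last_of_lt (Fin.castSucc_lt_last x) hx

lemma lf_inj : Function.Injective (lf (n := n)) := Finset.map_injective _

lemma card_lf (S : Finset (Fin n)) : (lf S).card = S.card := card_map _

lemma lf_mono {S T : Finset (Fin n)} (h : S ⊆ T) : lf S ⊆ lf T := map_subset_map.2 h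

lemma insert_last_inj {S T : Finset (Fin n)}
    (h : insert (Fin.last n) (lf S) = insert (Fin.last n) (lf T)) : S = T := by
  apply lf_inj
  have := congrArg (·.erase (Fin.last n)) h
  simpa [erase_insert, last_not_mem_lf] using this

lemma exists_lf_rep (S : Finset (Fin (n+1))) :
    (Fin.last n ∉ S ∧ ∃ T, S = lf T) ∨ (Fin.last n ∈ S ∧ ∃ T, S = insert (Fin.last n) (lf T)) := by
  set T := S.preimage Fin.castSucc (Fin.castSucc_injective n).injOn with hT
  have key : lf T = S.filter (· ≠ Fin.last n) := by
    ext a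
    simp only [lf, mem_map, Fin.castSuccEmb, mem_filter, hT, mem_preimage, Fin.coe_castSuccEmb]
    constructor
    · rintro ⟨x, hx, rfl⟩
      exact ⟨hx, Fin.ne_last_of_lt (Fin.castSucc_lt_last x)⟩
    · rintro ⟨ha, hne⟩
      obtain ⟨j, rfl⟩ := Fin.exists_castSucc_eq.2 hne
      exact ⟨j, ha, rfl⟩
  by_cases h : Fin.last n ∈ S
  · right
    refine ⟨h, T, ?_⟩
    rw [key]
    ext a
    by_cases ha : a = Fin.last n <;> simp [ha, h]
  · left
    refine ⟨h, T, ?_⟩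
    rw [key]
    ext a
    by_cases ha : a = Fin.last n <;> simp [ha, h]

/- ## chain lemmas -/
section ChainLemmas
variable {m : ℕ} {r : ℕ} {f : ℕ → Finset (Fin m)}

lemma chain_mono (hsub : ∀ i, r ≤ i → i < m - r → f i ⊆ f (i+1)) :
    ∀ i j, r ≤ i → i ≤ j → j ≤ m - r → f i ⊆ f j := by
  intro i j hi hij hj
  induction j with
  | zero => have : i = 0 := by omega
            subst this; exact subset_rfl
  | succ k ih =>
    rcases Nat.eq_or_lt_of_le hij with rfl | h
    · exact subset_rfl
    · exact (ih (by omega) (by omega)).trans (hsub k (by omega) (by omega))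

lemma chain_sup (hr : 2 * r ≤ m)
    (hsub : ∀ i, r ≤ i → i < m - r → f i ⊆ f (i+1)) :
    ((Finset.Icc r (m - r)).image f).sup id = f (m - r) := by
  apply le_antisymm
  · apply Finset.sup_le
    intro S hS
    simp only [mem_image, mem_Icc] at hS
    obtain ⟨i, ⟨hi1, hi2⟩, rfl⟩ := hS
    exact chain_mono hsub i (m - r) hi1 hi2 le_rfl
  · exact Finset.le_sup (f := id) (mem_image_of_mem f (by simp [mem_Icc]; omega))

lemma chain_injOn (hcard : ∀ i, r ≤ i → i ≤ m - r → (f i).card = i) :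
    ∀ i ∈ Finset.Icc r (m - r), ∀ j ∈ Finset.Icc r (m - r), f i = f j → i = j := by
  intro i hi j hj hij
  simp only [mem_Icc] at hi hj
  rw [← hcard i hi.1 hi.2, ← hcard j hj.1 hj.2, hij]

lemma chain_erase (hlt : r < m - r)
    (hcard : ∀ i, r ≤ i → i ≤ m - r → (f i).card = i) :
    ((Finset.Icc r (m - r)).image f).erase (f (m - r))
      = (Finset.Icc r (m - r - 1)).image f := by
  ext S
  simp only [mem_erase, mem_image, mem_Icc]
  constructor
  · rintro ⟨hne, i, ⟨hi1, hi2⟩, rfl⟩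
    refine ⟨i, ⟨hi1, ?_⟩, rfl⟩
    rcases Nat.eq_or_lt_of_le hi2 with rfl | h
    · exact absurd rfl hne
    · omega
  · rintro ⟨i, ⟨hi1, hi2⟩, rfl⟩
    refine ⟨fun h => ?_, i, ⟨hi1, by omega⟩, rfl⟩
    have := chain_injOn hcard i (by simp [mem_Icc]; omega) (m - r) (by simp [mem_Icc]; omega) h
    omega

end ChainLemmas

/- ## the two chain constructions -/

def g1 (C : Finset (Finset (Fin n))) : Finset (Finset (Fin (n+1))) :=
  insert (insert (Fin.last n) (lf (C.sup id))) (C.image lf)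

def g2 (C : Finset (Finset (Fin n))) : Finset (Finset (Fin (n+1))) :=
  (C.erase (C.sup id)).image (fun S => insert (Fin.last n) (lf S))

def ChainSpec (m : ℕ) (C : Finset (Finset (Fin m))) : Prop :=
  ∃ (r : ℕ) (f : ℕ → Finset (Fin m)), 2 * r ≤ m ∧
    (∀ i, r ≤ i → i ≤ m - r → (f i).card = i) ∧
    (∀ i, r ≤ i → i < m - r → f i ⊆ f (i + 1)) ∧
    C = (Finset.Icc r (m - r)).image f

lemma chainspec_sup_mem {C : Finset (Finset (Fin n))} (h : ChainSpec n C) :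
    C.sup id ∈ C := by
  obtain ⟨r, f, hr, hcard, hsub, rfl⟩ := h
  rw [chain_sup hr hsub]
  exact mem_image_of_mem f (by simp [mem_Icc]; omega)

lemma g1_spec {C : Finset (Finset (Fin n))} (h : ChainSpec n C) :
    ChainSpec (n+1) (g1 C) := by
  obtain ⟨r, f, hr, hcard, hsub, rfl⟩ := h
  set M := f (n - r) with hM
  refine ⟨r, fun i => if i ≤ n - r then lf (f i) else insert (Fin.last n) (lf M), by omega,
    ?_, ?_, ?_⟩
  · intro i hi1 hi2
    by_cases h : i ≤ n - r
    · simp only [if_pos h, card_lf]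
      exact hcard i hi1 h
    · have : i = n - r + 1 := by omega
      simp only [if_neg h, card_insert_of_notMem (last_not_mem_lf M), card_lf, hM,
        hcard (n-r) (by omega) le_rfl]
      rw [card_insert_of_notMem (last_not_mem_lf _), card_lf, hcard (n-r) (by omega) le_rfl]
      omega
  · intro i hi1 hi2
    by_cases h : i + 1 ≤ n - r
    · simp only [if_pos (by omega : i ≤ n - r), if_pos h]
      exact lf_mono (hsub i hi1 (by omega))
    · have hi : i = n - r := by omega
      subst hi
      dsimp only
      rw [if_pos le_rfl, if_neg h]
      exact subset_insert _ _
  · rw [g1, chain_sup hr hsub, ← hM]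
    have hicc : Finset.Icc r (n + 1 - r) = insert (n - r + 1) (Finset.Icc r (n - r)) := by
      ext x
      simp only [mem_Icc, mem_insert]
      omega
    rw [hicc, image_insert, if_neg (by omega), image_image]
    congr 1
    apply image_congr
    intro i hi
    simp only [mem_coe, mem_Icc] at hi
    simp [if_pos hi.2, Function.comp]

lemma g2_spec {C : Finset (Finset (Fin n))} (h : ChainSpec n C) (hcard2 : 1 < C.card) :
    ChainSpec (n+1) (g2 C) := by
  obtain ⟨r, f, hr, hcard, hsub, rfl⟩ := h
  have hlt : r < n - r := by
    by_contra hc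
    have hle : (Finset.Icc r (n-r)).card ≤ 1 := by
      rw [Nat.card_Icc]; omega
    exact absurd (le_trans (card_image_le (f := f)) hle) (by omega)
  refine ⟨r + 1, fun i => insert (Fin.last n) (lf (f (i - 1))), by omega, ?_, ?_, ?_⟩
  · intro i hi1 hi2
    rw [card_insert_of_notMem (last_not_mem_lf _), card_lf,
      hcard (i-1) (by omega) (by omega)]
    omega
  · intro i hi1 hi2
    apply insert_subset_insert
    apply lf_mono
    have := hsub (i - 1) (by omega) (by omega)
    rwa [(by omega : i - 1 + 1 = i)] at this
    -- note i + 1 - 1 = i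
  · rw [g2, chain_sup hr hsub, chain_erase hlt hcard]
    ext S
    simp only [mem_image, mem_Icc]
    constructor
    · rintro ⟨T, ⟨i, ⟨hi1, hi2⟩, rfl⟩, rfl⟩
      exact ⟨i + 1, ⟨by omega, by omega⟩, by rw [Nat.add_sub_cancel]⟩
    · rintro ⟨i, ⟨hi1, hi2⟩, rfl⟩
      exact ⟨f (i - 1), ⟨i - 1, ⟨by omega, by omega⟩, rfl⟩, rfl⟩

/- ## main induction -/

theorem scd_exists : ∀ m : ℕ, ∃ P : Finset (Finset (Finset (Fin m))),
    (∀ S : Finset (Fin m), ∃! C, C ∈ P ∧ S ∈ C) ∧ (∀ C ∈ P, ChainSpec m C) := by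
  intro m
  induction m with
  | zero =>
    refine ⟨{{(∅ : Finset (Fin 0))}}, ?_, ?_⟩
    · intro S
      have hS : S = ∅ := Subsingleton.elim _ _
      subst hS
      refine ⟨{∅}, ⟨by simp, by simp⟩, ?_⟩
      rintro D ⟨hD, _⟩
      simpa using hD
    · intro C hC
      simp only [mem_singleton] at hC
      subst hC
      exact ⟨0, fun _ => ∅, by omega, by simp, by omega, by simp⟩
  | succ n ih =>
    obtain ⟨P, hP1, hP2⟩ := ih
    refine ⟨P.image g1 ∪ (P.filter (fun C => 1 < C.card)).image g2, ?_, ?_⟩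
    · -- partition property
      intro S
      rcases exists_lf_rep S with ⟨hlast, T, rfl⟩ | ⟨hlast, T, rfl⟩
      · -- S = lf T
        obtain ⟨C, ⟨hCP, hTC⟩, hCuniq⟩ := hP1 T
        refine ⟨g1 C, ⟨by simp [mem_union]; exact Or.inl ⟨C, hCP, rfl⟩,
          by simp only [g1, mem_insert]; exact Or.inr (mem_image_of_mem lf hTC)⟩, ?_⟩
        rintro D ⟨hD, hSD⟩
        simp only [mem_union, mem_image, mem_filter] at hD
        rcases hD with ⟨C', hC'P, rfl⟩ | ⟨C', ⟨hC'P, _⟩, rfl⟩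
        · simp only [g1, mem_insert, mem_image] at hSD
          rcases hSD with h | ⟨T', hT'C', hTT'⟩
          · exact absurd (h ▸ mem_insert_self _ _) hlast
          · have : T' = T := lf_inj hTT'
            subst this
            rw [hCuniq C' ⟨hC'P, hT'C'⟩]
        · simp only [g2, mem_image] at hSD
          obtain ⟨T', _, hTT'⟩ := hSD
          exact absurd (hTT' ▸ mem_insert_self _ _) hlast
      · -- S = insert last (lf T)
        obtain ⟨C, ⟨hCP, hTC⟩, hCuniq⟩ := hP1 T
        have hsupC : C.sup id ∈ C := chainspec_sup_mem (hP2 C hCP)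
        by_cases htop : T = C.sup id
        · -- S is the new top of g1 C
          refine ⟨g1 C, ⟨by simp [mem_union]; exact Or.inl ⟨C, hCP, rfl⟩,
            by simp only [g1]; rw [htop]; exact mem_insert_self _ _⟩, ?_⟩
          rintro D ⟨hD, hSD⟩
          simp only [mem_union, mem_image, mem_filter] at hD
          rcases hD with ⟨C', hC'P, rfl⟩ | ⟨C', ⟨hC'P, _⟩, rfl⟩
          · simp only [g1, mem_insert, mem_image] at hSD
            rcases hSD with h | ⟨T', hT'C', hTT'⟩
            · have : T = C'.sup id := insert_last_inj h
              have hsup' : C'.sup id ∈ C' := chainspec_sup_mem (hP2 C' hC'P)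
              rw [hCuniq C' ⟨hC'P, this ▸ hsup'⟩]
            · exact absurd (hTT' ▸ hlast) (last_not_mem_lf T')
          · simp only [g2, mem_image, mem_erase] at hSD
            obtain ⟨T', ⟨hne, hT'C'⟩, hTT'⟩ := hSD
            have : T' = T := insert_last_inj hTT'
            subst this
            have := hCuniq C' ⟨hC'P, hT'C'⟩
            subst this
            exact absurd htop hne
        · -- S is in g2 C
          have h2 : 1 < C.card := one_lt_card.2 ⟨T, hTC, C.sup id, hsupC, htop⟩
          have hm1 : g2 C ∈ P.image g1 ∪ (P.filter (fun C => 1 < C.card)).image g2 := by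
            simp only [mem_union, mem_image, mem_filter]
            exact Or.inr ⟨C, ⟨hCP, h2⟩, rfl⟩
          have hm2 : insert (Fin.last n) (lf T) ∈ g2 C := by
            simp only [g2, mem_image]
            exact ⟨T, mem_erase.2 ⟨htop, hTC⟩, rfl⟩
          refine ⟨g2 C, ⟨hm1, hm2⟩, ?_⟩
          rintro D ⟨hD, hSD⟩
          simp only [mem_union, mem_image, mem_filter] at hD
          rcases hD with ⟨C', hC'P, rfl⟩ | ⟨C', ⟨hC'P, _⟩, rfl⟩
          · simp only [g1, mem_insert, mem_image] at hSD
            rcases hSD with h | ⟨T', hT'C', hTT'⟩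
            · have heq : T = C'.sup id := insert_last_inj h
              have hsup' : C'.sup id ∈ C' := chainspec_sup_mem (hP2 C' hC'P)
              have := hCuniq C' ⟨hC'P, heq ▸ hsup'⟩
              subst this
              exact absurd heq htop
            · exact absurd (hTT' ▸ hlast) (last_not_mem_lf T')
          · simp only [g2, mem_image, mem_erase] at hSD
            obtain ⟨T', ⟨hne, hT'C'⟩, hTT'⟩ := hSD
            have : T' = T := insert_last_inj hTT'
            subst this
            rw [hCuniq C' ⟨hC'P, hT'C'⟩]
    · -- chain spec
      intro D hD
      simp only [mem_union, mem_image, mem_filter] at hD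
      rcases hD with ⟨C, hCP, rfl⟩ | ⟨C, ⟨hCP, hc2⟩, rfl⟩
      · exact g1_spec (hP2 C hCP)
      · exact g2_spec (hP2 C hCP) hc2

theorem symmetric_chain_decomposition (n : ℕ) :
    ∃ P : Finset (Finset (Finset (Fin n))),
      (∀ S : Finset (Fin n), ∃! C, C ∈ P ∧ S ∈ C) ∧
      (∀ C ∈ P, ∃ (r : ℕ) (f : ℕ → Finset (Fin n)), 2 * r ≤ n ∧
        (∀ i, r ≤ i → i ≤ n - r → (f i).card = i) ∧
        (∀ i, r ≤ i → i < n - r → f i ⊆ f (i + 1)) ∧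
        C = (Finset.Icc r (n - r)).image f) := by
  obtain ⟨P, h1, h2⟩ := scd_exists n
  exact ⟨P, h1, h2⟩
end

section
/- Lubell's counting inequality: if 𝒜 is an antichain of subsets of {1,…,n}, then ∑_{S ∈ 𝒜} |S|!·(n − |S|)! ≤ n!. -/
open Finset

theorem lubell_counting (n : ℕ) (𝒜 : Finset (Finset (Fin n)))
    (h : ∀ S ∈ 𝒜, ∀ T ∈ 𝒜, S ≠ T → ¬ S ⊆ T) :
    ∑ S ∈ 𝒜, (S.card).factorial * (n - S.card).factorial ≤ Nat.factorial n := by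
  have hanti : IsAntichain (· ⊆ ·) (𝒜 : Set (Finset (Fin n))) := fun S hS T hT hne hsub =>
    h S hS T hT hne hsub
  have key := Finset.sum_card_slice_div_choose_le_one (𝕜 := ℚ) hanti
  rw [Fintype.card_fin] at key
  have hq : (∑ S ∈ 𝒜, (((S.card).factorial * (n - S.card).factorial : ℕ) : ℚ))
      ≤ (n.factorial : ℚ) := by
    have hmul := mul_le_mul_of_nonneg_left key
      (by positivity : (0:ℚ) ≤ (n.factorial : ℚ))
    rw [mul_one, Finset.mul_sum] at hmul
    refine le_trans (le_of_eq ?_) hmul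
    rw [← Finset.sum_fiberwise_of_maps_to (g := fun S : Finset (Fin n) => S.card)
      (t := Finset.range (n + 1))
      (fun S hS => Finset.mem_range.2 (Nat.lt_succ_of_le (by
        simpa using Finset.card_le_card (Finset.subset_univ S))))]
    refine Finset.sum_congr rfl fun r hr => ?_
    rw [Finset.mem_range, Nat.lt_succ_iff] at hr
    have hslice : 𝒜.filter (fun S => S.card = r) = 𝒜 # r := rfl
    rw [hslice]
    have hterm : ∀ S ∈ 𝒜 # r,
        (((S.card).factorial * (n - S.card).factorial : ℕ) : ℚ)
          = ((r.factorial * (n - r).factorial : ℕ) : ℚ) := by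
      intro S hS
      rw [(Finset.mem_slice.1 hS).2]
    rw [Finset.sum_congr rfl hterm, Finset.sum_const, nsmul_eq_mul]
    have hch : (n.choose r : ℚ) ≠ 0 := by
      exact_mod_cast (Nat.choose_pos hr).ne'
    have hnat : r.factorial * (n - r).factorial * n.choose r = n.factorial := by
      rw [mul_comm, ← mul_assoc, Nat.choose_mul_factorial_mul_factorial hr]
    have hfact : ((r.factorial * (n - r).factorial : ℕ) : ℚ) * (n.choose r : ℚ)
        = (n.factorial : ℚ) := by exact_mod_cast congrArg Nat.cast hnat
    push_cast at hfact ⊢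
    field_simp
    linear_combination ((#(𝒜 # r) : ℚ)) * hfact
  rw [← Nat.cast_sum] at hq
  exact_mod_cast hq
end

section
/- The LYM inequality: if 𝒜 is an antichain of subsets of {1,…,n}, then ∑_{S ∈ 𝒜} 1 / C(n, |S|) ≤ 1. -/
theorem lym_inequality (n : ℕ) (𝒜 : Finset (Finset (Fin n)))
    (h : ∀ S ∈ 𝒜, ∀ T ∈ 𝒜, S ≠ T → ¬ S ⊆ T) :
    ∑ S ∈ 𝒜, (1 : ℚ) / (Nat.choose n S.card) ≤ 1 := by
  classical
  have h𝒜 : IsAntichain (· ⊆ ·) (𝒜 : Set (Finset (Fin n))) := by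
    intro S hS T hT hne hsub
    exact h S hS T hT hne hsub
  have key := Finset.sum_card_slice_div_choose_le_one (𝕜 := ℚ) h𝒜
  rw [Fintype.card_fin] at key
  refine le_trans (le_of_eq ?_) key
  rw [← Finset.sum_fiberwise_of_maps_to (g := fun S : Finset (Fin n) => S.card)
      (fun S hS => Finset.mem_range.2 (Nat.lt_succ_of_le (by
        simpa using Finset.card_le_univ S)))]
  refine Finset.sum_congr rfl fun r _ => ?_
  rw [Finset.slice]
  have : ∀ S ∈ Finset.filter (fun i => i.card = r) 𝒜,
      (1 : ℚ) / (Nat.choose n S.card) = 1 / (Nat.choose n r) := fun S hS => by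
    rw [(Finset.mem_filter.1 hS).2]
  rw [Finset.sum_congr rfl this, Finset.sum_const, nsmul_eq_mul, mul_one_div]
end

section
/- Let V be the ℚ-vector space with basis indexed by all subsets of {1,…,n}, and let M, L : V → V be the linear maps defined on basis elements by M(S) = ∑_{j ∉ S} (S ∪ {j}) and L(S) = ∑_{i ∈ S} (S \ {i}). Then for every subset S of {1,…,n} with |S| = k, (M∘L − L∘M)(S) = (2k − n)·S; that is, on the span of the k-element subsets, ML − LM acts as (2k − n) times the identity. -/
/-- The raising operator `M` on the ℚ-vector space with basis the subsets of `{1,…,n}`: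
on a basis element `S` it is the sum of all `S ∪ {j}` with `j ∉ S`. -/
noncomputable def raiseOp (n : ℕ) : (Finset (Fin n) →₀ ℚ) →ₗ[ℚ] (Finset (Fin n) →₀ ℚ) :=
  Finsupp.lsum ℚ fun S : Finset (Fin n) =>
    LinearMap.toSpanSingleton ℚ _ (∑ j ∈ Sᶜ, Finsupp.single (insert j S) (1 : ℚ))

/-- The lowering operator `L` on the ℚ-vector space with basis the subsets of `{1,…,n}`:
on a basis element `S` it is the sum of all `S \ {i}` with `i ∈ S`. -/
noncomputable def lowerOp (n : ℕ) : (Finset (Fin n) →₀ ℚ) →ₗ[ℚ] (Finset (Fin n) →₀ ℚ) :=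
  Finsupp.lsum ℚ fun S : Finset (Fin n) =>
    LinearMap.toSpanSingleton ℚ _ (∑ i ∈ S, Finsupp.single (S.erase i) (1 : ℚ))

lemma raise_single (n : ℕ) (S : Finset (Fin n)) :
    raiseOp n (Finsupp.single S (1 : ℚ)) = ∑ j ∈ Sᶜ, Finsupp.single (insert j S) (1 : ℚ) := by
  simp [raiseOp]

lemma lower_single (n : ℕ) (S : Finset (Fin n)) :
    lowerOp n (Finsupp.single S (1 : ℚ)) = ∑ i ∈ S, Finsupp.single (S.erase i) (1 : ℚ) := by
  simp [lowerOp]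

theorem commutator_on_basis (n k : ℕ) (S : Finset (Fin n)) (hS : S.card = k) :
    raiseOp n (lowerOp n (Finsupp.single S (1 : ℚ))) -
      lowerOp n (raiseOp n (Finsupp.single S (1 : ℚ))) =
    ((2 * (k : ℚ) - n)) • Finsupp.single S (1 : ℚ) := by
  have hML : raiseOp n (lowerOp n (Finsupp.single S (1 : ℚ))) =
      ∑ i ∈ S, (Finsupp.single S (1:ℚ) +
        ∑ j ∈ Sᶜ, Finsupp.single (insert j (S.erase i)) (1:ℚ)) := by
    rw [lower_single, map_sum]
    refine Finset.sum_congr rfl fun i hi => ?_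
    rw [raise_single]
    have h1 : (S.erase i)ᶜ = insert i Sᶜ := by
      rw [Finset.compl_erase]
    rw [h1, Finset.sum_insert (by simp [hi]), Finset.insert_erase hi]
  have hLM : lowerOp n (raiseOp n (Finsupp.single S (1 : ℚ))) =
      ∑ j ∈ Sᶜ, (Finsupp.single S (1:ℚ) +
        ∑ i ∈ S, Finsupp.single (insert j (S.erase i)) (1:ℚ)) := by
    rw [raise_single, map_sum]
    refine Finset.sum_congr rfl fun j hj => ?_
    have hjS : j ∉ S := by simpa using hj
    rw [lower_single, Finset.sum_insert hjS, Finset.erase_insert hjS]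
    congr 1
    refine Finset.sum_congr rfl fun i hi => ?_
    rw [Finset.erase_insert_of_ne (by rintro rfl; exact hjS hi)]
  rw [hML, hLM]
  simp only [Finset.sum_add_distrib, Finset.sum_const]
  rw [Finset.sum_comm]
  have hcard : Sᶜ.card = n - k := by
    simp [Finset.card_compl, hS]
  have hk : k ≤ n := hS ▸ (by simpa using S.card_le_univ)
  rw [hS, hcard]
  rw [add_sub_add_right_eq_sub]
  rw [← Nat.cast_smul_eq_nsmul ℚ, ← Nat.cast_smul_eq_nsmul ℚ, ← sub_smul]
  congr 1
  push_cast [hk]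
  ring
end

section
/- Let V be the ℚ-vector space with basis indexed by all subsets of {1,…,n}, and let M : V → V be the linear map defined on basis elements by M(S) = ∑_{j ∉ S} (S ∪ {j}). If 2k < n, then M is injective on the span of the k-element subsets: for every f in the span of the basis vectors indexed by subsets of cardinality k, M(f) = 0 implies f = 0. -/
namespace RaiseAux

variable {n : ℕ}

/-- Standard inner product on the finitely supported functions. -/
noncomputable def ip (f g : Finset (Fin n) →₀ ℚ) : ℚ :=
  f.sum fun S a => a * g S

lemma ip_zero_left (g : Finset (Fin n) →₀ ℚ) : ip 0 g = 0 :=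
  Finsupp.sum_zero_index

lemma ip_add_left (f₁ f₂ g : Finset (Fin n) →₀ ℚ) :
    ip (f₁ + f₂) g = ip f₁ g + ip f₂ g :=
  Finsupp.sum_add_index' (fun _ => zero_mul _) (fun _ _ _ => add_mul _ _ _)

lemma ip_single_left (S : Finset (Fin n)) (a : ℚ) (g : Finset (Fin n) →₀ ℚ) :
    ip (Finsupp.single S a) g = a * g S :=
  Finsupp.sum_single_index (zero_mul _)

lemma ip_zero_right (f : Finset (Fin n) →₀ ℚ) : ip f 0 = 0 := by
  simp [ip, Finsupp.sum]

lemma ip_add_right (f g₁ g₂ : Finset (Fin n) →₀ ℚ) :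
    ip f (g₁ + g₂) = ip f g₁ + ip f g₂ := by
  simp [ip, Finsupp.sum, mul_add, Finset.sum_add_distrib]

lemma ip_smul_right (c : ℚ) (f g : Finset (Fin n) →₀ ℚ) :
    ip f (c • g) = c * ip f g := by
  simp only [ip, Finsupp.sum, Finsupp.smul_apply, smul_eq_mul, Finset.mul_sum]
  exact Finset.sum_congr rfl fun _ _ => by ring

lemma ip_smul_left (c : ℚ) (f g : Finset (Fin n) →₀ ℚ) :
    ip (c • f) g = c * ip f g := by
  induction f using Finsupp.induction_linear with
  | zero => simp [ip_zero_left]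
  | add f₁ f₂ h₁ h₂ => rw [smul_add, ip_add_left, h₁, h₂, ip_add_left, mul_add]
  | single S a =>
      rw [Finsupp.smul_single, ip_single_left, ip_single_left]
      simp only [smul_eq_mul]; ring

lemma ip_sum_left {ι : Type*} (s : Finset ι) (F : ι → (Finset (Fin n) →₀ ℚ))
    (g : Finset (Fin n) →₀ ℚ) :
    ip (∑ i ∈ s, F i) g = ∑ i ∈ s, ip (F i) g := by
  classical
  induction s using Finset.induction_on with
  | empty => simp [ip_zero_left]
  | insert _ _ hx ih =>
      rw [Finset.sum_insert hx, Finset.sum_insert hx, ip_add_left, ih]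

lemma ip_symm (f g : Finset (Fin n) →₀ ℚ) : ip f g = ip g f := by
  induction f using Finsupp.induction_linear with
  | zero => simp [ip_zero_left, ip_zero_right]
  | add f₁ f₂ h₁ h₂ => rw [ip_add_left, ip_add_right, h₁, h₂]
  | single S a =>
      induction g using Finsupp.induction_linear with
      | zero => simp [ip_zero_left, ip_zero_right]
      | add g₁ g₂ h₁ h₂ => rw [ip_add_left, ip_add_right, h₁, h₂]
      | single T b =>
          rw [ip_single_left, ip_single_left, Finsupp.single_apply, Finsupp.single_apply]
          by_cases hST : S = T
          · subst hST; simp [mul_comm]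
          · simp [hST, Ne.symm hST]

lemma ip_self_nonneg (f : Finset (Fin n) →₀ ℚ) : 0 ≤ ip f f :=
  Finset.sum_nonneg fun S _ => mul_self_nonneg _

lemma eq_zero_of_ip_self (f : Finset (Fin n) →₀ ℚ) (hf : ip f f = 0) : f = 0 := by
  by_contra hne
  obtain ⟨S, hS⟩ := Finsupp.ne_iff.mp hne
  rw [Finsupp.coe_zero, Pi.zero_apply] at hS
  have hmem : S ∈ f.support := Finsupp.mem_support_iff.mpr hS
  have := (Finset.sum_eq_zero_iff_of_nonneg
    (fun T _ => mul_self_nonneg (f T))).mp hf S hmem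
  exact hS (by nlinarith [this])

lemma raise_single (S : Finset (Fin n)) :
    raiseOp n (Finsupp.single S (1 : ℚ)) =
      ∑ j ∈ Sᶜ, Finsupp.single (insert j S) (1 : ℚ) := by
  simp [raiseOp, Finsupp.lsum_apply, Finsupp.sum_single_index]

lemma lower_single (S : Finset (Fin n)) :
    lowerOp n (Finsupp.single S (1 : ℚ)) =
      ∑ i ∈ S, Finsupp.single (S.erase i) (1 : ℚ) := by
  simp [lowerOp, Finsupp.lsum_apply, Finsupp.sum_single_index]

lemma filter_eq (S T : Finset (Fin n)) :
    T.filter (fun i => T.erase i = S) = Sᶜ.filter (fun j => T = insert j S) := by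
  ext a
  simp only [Finset.mem_filter, Finset.mem_compl]
  constructor
  · rintro ⟨haT, hTe⟩
    have haS : a ∉ S := by rw [← hTe]; exact Finset.notMem_erase a T
    refine ⟨haS, ?_⟩
    rw [← hTe, Finset.insert_erase haT]
  · rintro ⟨haS, hT⟩
    subst hT
    exact ⟨Finset.mem_insert_self a S, Finset.erase_insert haS⟩

lemma lower_apply (g : Finset (Fin n) →₀ ℚ) (S : Finset (Fin n)) :
    lowerOp n g S = ∑ j ∈ Sᶜ, g (insert j S) := by
  induction g using Finsupp.induction_linear with
  | zero => simp
  | add g₁ g₂ h₁ h₂ => simp [h₁, h₂, Finset.sum_add_distrib]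
  | single T b =>
      have hb : Finsupp.single T b = b • Finsupp.single T (1 : ℚ) := by
        rw [Finsupp.smul_single, smul_eq_mul, mul_one]
      have hL : (∑ i ∈ T, Finsupp.single (T.erase i) (1 : ℚ)) S =
          ∑ i ∈ T, (Finsupp.single (T.erase i) (1 : ℚ)) S := by
        rw [Finsupp.finset_sum_apply]
      have h1 : ∑ i ∈ T, (Finsupp.single (T.erase i) (1 : ℚ)) S =
          ((T.filter fun i => T.erase i = S).card : ℚ) := by
        simp only [Finsupp.single_apply]
        rw [Finset.sum_boole]
      have h2 : ∑ j ∈ Sᶜ, (Finsupp.single T b) (insert j S) =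
          b * ((Sᶜ.filter fun j => T = insert j S).card : ℚ) := by
        simp only [Finsupp.single_apply]
        rw [← Finset.sum_boole, Finset.mul_sum]
        exact Finset.sum_congr rfl fun j _ => by split <;> simp
      rw [h2, hb, map_smul, Finsupp.smul_apply, lower_single, smul_eq_mul, hL, h1, filter_eq]

lemma adjoint (f g : Finset (Fin n) →₀ ℚ) :
    ip (raiseOp n f) g = ip f (lowerOp n g) := by
  induction f using Finsupp.induction_linear with
  | zero => simp [ip_zero_left]
  | add f₁ f₂ h₁ h₂ => rw [map_add, ip_add_left, h₁, h₂, ip_add_left]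
  | single S a =>
      have hb : Finsupp.single S a = a • Finsupp.single S (1 : ℚ) := by
        rw [Finsupp.smul_single, smul_eq_mul, mul_one]
      rw [hb, map_smul, ip_smul_left, ip_smul_left, raise_single, ip_sum_left,
        ip_single_left, one_mul, lower_apply]
      congr 1
      exact Finset.sum_congr rfl fun j _ => by rw [ip_single_left, one_mul]

lemma commutator_single (S : Finset (Fin n)) :
    lowerOp n (raiseOp n (Finsupp.single S (1 : ℚ))) -
      raiseOp n (lowerOp n (Finsupp.single S (1 : ℚ))) =
      ((Sᶜ.card : ℚ) - (S.card : ℚ)) • Finsupp.single S (1 : ℚ) := by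
  have hLM : lowerOp n (raiseOp n (Finsupp.single S (1 : ℚ))) =
      (Sᶜ.card : ℚ) • Finsupp.single S (1 : ℚ) +
        ∑ j ∈ Sᶜ, ∑ i ∈ S, Finsupp.single (insert j (S.erase i)) (1 : ℚ) := by
    rw [raise_single, map_sum]
    have hjs : ∀ j ∈ Sᶜ, lowerOp n (Finsupp.single (insert j S) (1 : ℚ)) =
        Finsupp.single S (1 : ℚ) +
          ∑ i ∈ S, Finsupp.single (insert j (S.erase i)) (1 : ℚ) := by
      intro j hj
      have hjS : j ∉ S := Finset.mem_compl.mp hj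
      rw [lower_single, Finset.sum_insert hjS, Finset.erase_insert hjS]
      congr 1
      refine Finset.sum_congr rfl fun i hi => ?_
      have hij : i ≠ j := fun hij => hjS (hij ▸ hi)
      rw [Finset.erase_insert_of_ne hij.symm]
    rw [Finset.sum_congr rfl hjs, Finset.sum_add_distrib, Finset.sum_const,
      Nat.cast_smul_eq_nsmul]
  have hML : raiseOp n (lowerOp n (Finsupp.single S (1 : ℚ))) =
      (S.card : ℚ) • Finsupp.single S (1 : ℚ) +
        ∑ i ∈ S, ∑ j ∈ Sᶜ, Finsupp.single (insert j (S.erase i)) (1 : ℚ) := by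
    rw [lower_single, map_sum]
    have his : ∀ i ∈ S, raiseOp n (Finsupp.single (S.erase i) (1 : ℚ)) =
        Finsupp.single S (1 : ℚ) +
          ∑ j ∈ Sᶜ, Finsupp.single (insert j (S.erase i)) (1 : ℚ) := by
      intro i hi
      rw [raise_single, Finset.compl_erase, Finset.sum_insert (by simp [hi]),
        Finset.insert_erase hi]
    rw [Finset.sum_congr rfl his, Finset.sum_add_distrib, Finset.sum_const,
      Nat.cast_smul_eq_nsmul]
  rw [hLM, hML, Finset.sum_comm, sub_smul]
  abel

lemma commutator_span {k : ℕ} (hkn : k ≤ n) (f : Finset (Fin n) →₀ ℚ)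
    (hf : f ∈ Submodule.span ℚ
      {g : Finset (Fin n) →₀ ℚ | ∃ S : Finset (Fin n), S.card = k ∧ g = Finsupp.single S 1}) :
    lowerOp n (raiseOp n f) =
      raiseOp n (lowerOp n f) + (((n : ℚ) - 2 * k)) • f := by
  induction hf using Submodule.span_induction with
  | mem g hg =>
      obtain ⟨S, hSk, rfl⟩ := hg
      have hc := commutator_single (n := n) S
      have hcard : (Sᶜ.card : ℚ) - (S.card : ℚ) = (n : ℚ) - 2 * k := by
        rw [Finset.card_compl, Fintype.card_fin, hSk,
          Nat.cast_sub (hSk ▸ hkn)]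
        ring
      rw [hcard] at hc
      linear_combination (norm := module) hc
  | zero => simp
  | add g₁ g₂ _ _ h₁ h₂ => rw [map_add, map_add, h₁, map_add, map_add, h₂, smul_add]; abel
  | smul c g _ hg => rw [map_smul, map_smul, hg, smul_add, map_smul, map_smul, smul_comm]

end RaiseAux

theorem raiseOp_injective_on_span (n k : ℕ) (h : 2 * k < n)
    (f : Finset (Fin n) →₀ ℚ)
    (hf : f ∈ Submodule.span ℚ
      {g : Finset (Fin n) →₀ ℚ | ∃ S : Finset (Fin n), S.card = k ∧ g = Finsupp.single S 1})
    (hMf : raiseOp n f = 0) : f = 0 := by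
  open RaiseAux in
  have hkn : k ≤ n := by omega
  have hcomm := RaiseAux.commutator_span hkn f hf
  have hc : (0 : ℚ) < (n : ℚ) - 2 * k := by
    have : (2 * k : ℚ) < n := by exact_mod_cast h
    linarith
  have h0 : (0 : ℚ) = RaiseAux.ip (lowerOp n f) (lowerOp n f) +
      ((n : ℚ) - 2 * k) * RaiseAux.ip f f := by
    have e1 : RaiseAux.ip (raiseOp n f) (raiseOp n f) = 0 := by
      rw [hMf]; exact RaiseAux.ip_zero_left _
    calc (0 : ℚ) = RaiseAux.ip (raiseOp n f) (raiseOp n f) := e1.symm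
      _ = RaiseAux.ip f (lowerOp n (raiseOp n f)) := RaiseAux.adjoint _ _
      _ = RaiseAux.ip f (raiseOp n (lowerOp n f)) +
          ((n : ℚ) - 2 * k) * RaiseAux.ip f f := by
            rw [hcomm, RaiseAux.ip_add_right, RaiseAux.ip_smul_right]
      _ = RaiseAux.ip (lowerOp n f) (lowerOp n f) +
          ((n : ℚ) - 2 * k) * RaiseAux.ip f f := by
            rw [RaiseAux.ip_symm f, RaiseAux.adjoint]
  have h1 := RaiseAux.ip_self_nonneg (lowerOp n f)
  have h2 := RaiseAux.ip_self_nonneg f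
  have hff : RaiseAux.ip f f = 0 := by nlinarith
  exact RaiseAux.eq_zero_of_ip_self f hff
end
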